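/- In CCS⁻, for every process P, whenever !P ⟹ P' (P' is reached from !P by a finite sequence of τ-transitions), it holds that !P ≈ P'. -/

import Mathlib

/-- Processes of CCS⁻ (CCS without restriction): 0, input prefix, output prefix,
    parallel composition, replication. Names are natural numbers. -/
inductive Proc : Type where
  | nil : Proc
  | inp : ℕ → Proc → Proc
  | out : ℕ → Proc → Proc
  | par : Proc → Proc → Proc
  | bang : Proc → Proc

/-- Actions: input `a`, output `ā`, or the internal action `τ`. -/
inductive Act : Type where
  | inp : ℕ → Act
  | out : ℕ → Act
  | tau : Act

/-- The labelled transition relation of CCS⁻. -/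
inductive Step : Proc → Act → Proc → Prop where
  | inp (a : ℕ) (P : Proc) : Step (.inp a P) (.inp a) P
  | out (a : ℕ) (P : Proc) : Step (.out a P) (.out a) P
  | comL {a : ℕ} {P P' Q Q' : Proc} :
      Step P (.out a) P' → Step Q (.inp a) Q' → Step (.par P Q) .tau (.par P' Q')
  | comR {a : ℕ} {P P' Q Q' : Proc} :
      Step P (.out a) P' → Step Q (.inp a) Q' → Step (.par Q P) .tau (.par Q' P')
  | parL {α : Act} {P P' : Proc} (Q : Proc) :
      Step P α P' → Step (.par P Q) α (.par P' Q)
  | parR {α : Act} {P P' : Proc} (Q : Proc) :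
      Step P α P' → Step (.par Q P) α (.par Q P')
  | bang {α : Act} {P P' : Proc} :
      Step P α P' → Step (.bang P) α (.par P' (.bang P))
  | bangCom {a : ℕ} {P P' P'' : Proc} :
      Step P (.inp a) P' → Step P (.out a) P'' →
      Step (.bang P) .tau (.par P' (.par P'' (.bang P)))

/-- A single τ-transition. -/
def TauStep (P Q : Proc) : Prop := Step P .tau Q

/-- `P ⟹ Q`: reflexive–transitive closure of τ-transitions. -/
def Taus : Proc → Proc → Prop := Relation.ReflTransGen TauStep

/-- `P ⟹α Q`: `P ⟹ ⟶α ⟹ Q`. -/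
def WeakStep (P : Proc) (α : Act) (Q : Proc) : Prop :=
  ∃ P₁ P₂, Taus P P₁ ∧ Step P₁ α P₂ ∧ Taus P₂ Q

/-- `P ⟹α̂ Q`: `P ⟹ Q` if `α = τ`, and `P ⟹α Q` otherwise. -/
def WeakHat (P : Proc) (α : Act) (Q : Proc) : Prop :=
  match α with
  | .tau => Taus P Q
  | _ => WeakStep P α Q

/-- `P ⟶τ^k Q`: exactly `k` consecutive τ-transitions. -/
def TauN : Proc → ℕ → Proc → Prop
  | P, 0, Q => P = Q
  | P, n + 1, Q => ∃ P₁, TauStep P P₁ ∧ TauN P₁ n Q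

/-- `P` is divergent: there is an infinite sequence of τ-transitions from `P`. -/
def Divergent (P : Proc) : Prop :=
  ∃ f : ℕ → Proc, f 0 = P ∧ ∀ n, TauStep (f n) (f (n + 1))

/-- A relation is divergence-sensitive if related processes diverge together. -/
def DivSensitive (R : Proc → Proc → Prop) : Prop :=
  ∀ P Q, R P Q → (Divergent P ↔ Divergent Q)

/-- Weak bisimulation (symmetric, divergence-sensitive). -/
def IsWeakBisim (R : Proc → Proc → Prop) : Prop :=
  Symmetric R ∧ DivSensitive R ∧
    ∀ P Q, R P Q → ∀ α P', Step P α P' → ∃ Q', WeakHat Q α Q' ∧ R P' Q'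

/-- `P ≈ Q`: weak bisimilarity. -/
def WBisim (P Q : Proc) : Prop := ∃ R, IsWeakBisim R ∧ R P Q

/-- Strong bisimulation (symmetric, divergence-sensitive). -/
def IsStrongBisim (R : Proc → Proc → Prop) : Prop :=
  Symmetric R ∧ DivSensitive R ∧
    ∀ P Q, R P Q → ∀ α P', Step P α P' → ∃ Q', Step Q α Q' ∧ R P' Q'

/-- `P ~ Q`: strong bisimilarity. -/
def SBisim (P Q : Proc) : Prop := ∃ R, IsStrongBisim R ∧ R P Q

/-- Structural congruence: the smallest congruence with `P|0 ≡ P`,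
    `P|(Q|R) ≡ (P|Q)|R`, `P|Q ≡ Q|P`. -/
inductive SC : Proc → Proc → Prop where
  | refl (P : Proc) : SC P P
  | symm {P Q : Proc} : SC P Q → SC Q P
  | trans {P Q R : Proc} : SC P Q → SC Q R → SC P R
  | inp (a : ℕ) {P Q : Proc} : SC P Q → SC (.inp a P) (.inp a Q)
  | out (a : ℕ) {P Q : Proc} : SC P Q → SC (.out a P) (.out a Q)
  | par {P P' Q Q' : Proc} : SC P P' → SC Q Q' → SC (.par P Q) (.par P' Q')
  | bang {P Q : Proc} : SC P Q → SC (.bang P) (.bang Q)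
  | parNil (P : Proc) : SC (.par P .nil) P
  | parAssoc (P Q R : Proc) : SC (.par P (.par Q R)) (.par (.par P Q) R)
  | parComm (P Q : Proc) : SC (.par P Q) (.par Q P)

/-- Contexts: process terms with a single hole. -/
inductive Ctx : Type where
  | hole : Ctx
  | inp : ℕ → Ctx → Ctx
  | out : ℕ → Ctx → Ctx
  | parL : Ctx → Proc → Ctx
  | parR : Proc → Ctx → Ctx
  | bang : Ctx → Ctx

/-- `C.fill P`: the process `C[P]`. -/
def Ctx.fill : Ctx → Proc → Proc
  | .hole, P => P
  | .inp a C, P => .inp a (C.fill P)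
  | .out a C, P => .out a (C.fill P)
  | .parL C Q, P => .par (C.fill P) Q
  | .parR Q C, P => .par Q (C.fill P)
  | .bang C, P => .bang (C.fill P)

/-- Weak bisimulation up-to context. -/
def IsWeakBisimUptoCtx (R : Proc → Proc → Prop) : Prop :=
  Symmetric R ∧ DivSensitive R ∧
    ∀ P Q, R P Q → ∀ α P', Step P α P' →
      ∃ Q', WeakHat Q α Q' ∧
        ∃ (C : Ctx) (P₁ Q₁ : Proc), SC P' (C.fill P₁) ∧ SC Q' (C.fill Q₁) ∧ R P₁ Q₁

/-- Quasi-strong bisimulation: visible actions are matched by `⟹ ⟶α`,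
    τ-actions are matched by a single τ. -/
def IsQSBisim (R : Proc → Proc → Prop) : Prop :=
  Symmetric R ∧ DivSensitive R ∧
    ∀ P Q, R P Q →
      (∀ α P', Step P α P' → α ≠ .tau →
          ∃ Q₁ Q', Taus Q Q₁ ∧ Step Q₁ α Q' ∧ R P' Q') ∧
      (∀ P', Step P .tau P' → ∃ Q', Step Q .tau Q' ∧ R P' Q')

/-- `P ≃qs Q`: quasi-strong bisimilarity. -/
def QSBisim (P Q : Proc) : Prop := ∃ R, IsQSBisim R ∧ R P Q

/-- Quasi-strong branching bisimulation. -/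
def IsQSBBisim (R : Proc → Proc → Prop) : Prop :=
  Symmetric R ∧ DivSensitive R ∧
    ∀ P Q, R P Q →
      (∀ α P', Step P α P' → α ≠ .tau →
          ∃ Q'' Q', Taus Q Q'' ∧ Step Q'' α Q' ∧ R P Q'' ∧ R P' Q') ∧
      (∀ P', Step P .tau P' → ∃ Q', Step Q .tau Q' ∧ R P' Q')

/-- `P ≃qsb Q`: quasi-strong branching bisimilarity. -/
def QSBBisim (P Q : Proc) : Prop := ∃ R, IsQSBBisim R ∧ R P Q

/-- Branching bisimulation (divergence-sensitive). -/
def IsBrBisim (R : Proc → Proc → Prop) : Prop :=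
  Symmetric R ∧ DivSensitive R ∧
    ∀ P Q, R P Q → ∀ α P', Step P α P' →
      (α = .tau ∧ R P' Q) ∨
      ∃ Q'' Q', Taus Q Q'' ∧ Step Q'' α Q' ∧ R P Q'' ∧ R P' Q'

/-- `P ≃b Q`: branching bisimilarity. -/
def BrBisim (P Q : Proc) : Prop := ∃ R, IsBrBisim R ∧ R P Q

/-- τ-sequences all of whose steps are state-preserving. -/
def PresTaus : Proc → Proc → Prop :=
  Relation.ReflTransGen (fun P Q => TauStep P Q ∧ WBisim P Q)

/-- `Stab P k`: `P` reaches in exactly `k` τ-steps a process all of whose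
    τ-derivatives are weakly bisimilar to it. -/
def Stab (P : Proc) (k : ℕ) : Prop :=
  ∃ P', TauN P k P' ∧ ∀ P'', Taus P' P'' → WBisim P' P''
/-! ### Auxiliary lemmas -/

/-- SC is a strong bisimulation (both directions simultaneously). -/
theorem sc_step_aux {X Y : Proc} (h : SC X Y) :
    (∀ α X', Step X α X' → ∃ Y', Step Y α Y' ∧ SC X' Y') ∧
    (∀ α Y', Step Y α Y' → ∃ X', Step X α X' ∧ SC X' Y') := by
  induction h with
  | refl P => exact ⟨fun α X' s => ⟨X', s, .refl _⟩, fun α Y' s => ⟨Y', s, .refl _⟩⟩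
  | symm _ ih =>
      refine ⟨fun α X' s => ?_, fun α Y' s => ?_⟩
      · obtain ⟨Z, sz, hz⟩ := ih.2 α X' s; exact ⟨Z, sz, hz.symm⟩
      · obtain ⟨Z, sz, hz⟩ := ih.1 α Y' s; exact ⟨Z, sz, hz.symm⟩
  | trans _ _ ih1 ih2 =>
      refine ⟨fun α X' s => ?_, fun α Y' s => ?_⟩
      · obtain ⟨Z, sz, hz⟩ := ih1.1 α X' s
        obtain ⟨W, sw, hw⟩ := ih2.1 α Z sz
        exact ⟨W, sw, hz.trans hw⟩
      · obtain ⟨Z, sz, hz⟩ := ih2.2 α Y' s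
        obtain ⟨W, sw, hw⟩ := ih1.2 α Z sz
        exact ⟨W, sw, hw.trans hz⟩
  | inp a h ih =>
      refine ⟨fun α X' s => ?_, fun α Y' s => ?_⟩
      · cases s; exact ⟨_, .inp _ _, h⟩
      · cases s; exact ⟨_, .inp _ _, h⟩
  | out a h ih =>
      refine ⟨fun α X' s => ?_, fun α Y' s => ?_⟩
      · cases s; exact ⟨_, .out _ _, h⟩
      · cases s; exact ⟨_, .out _ _, h⟩
  | par hP hQ ihP ihQ =>
      refine ⟨fun α X' s => ?_, fun α Y' s => ?_⟩
      · cases s with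
        | comL s1 s2 =>
            obtain ⟨A, sA, hA⟩ := ihP.1 _ _ s1
            obtain ⟨B, sB, hB⟩ := ihQ.1 _ _ s2
            exact ⟨_, .comL sA sB, .par hA hB⟩
        | comR s1 s2 =>
            obtain ⟨A, sA, hA⟩ := ihQ.1 _ _ s1
            obtain ⟨B, sB, hB⟩ := ihP.1 _ _ s2
            exact ⟨_, .comR sA sB, .par hB hA⟩
        | parL _ s1 =>
            obtain ⟨A, sA, hA⟩ := ihP.1 _ _ s1
            exact ⟨_, .parL _ sA, .par hA hQ⟩
        | parR _ s1 =>
            obtain ⟨A, sA, hA⟩ := ihQ.1 _ _ s1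
            exact ⟨_, .parR _ sA, .par hP hA⟩
      · cases s with
        | comL s1 s2 =>
            obtain ⟨A, sA, hA⟩ := ihP.2 _ _ s1
            obtain ⟨B, sB, hB⟩ := ihQ.2 _ _ s2
            exact ⟨_, .comL sA sB, .par hA hB⟩
        | comR s1 s2 =>
            obtain ⟨A, sA, hA⟩ := ihQ.2 _ _ s1
            obtain ⟨B, sB, hB⟩ := ihP.2 _ _ s2
            exact ⟨_, .comR sA sB, .par hB hA⟩
        | parL _ s1 =>
            obtain ⟨A, sA, hA⟩ := ihP.2 _ _ s1
            exact ⟨_, .parL _ sA, .par hA hQ⟩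
        | parR _ s1 =>
            obtain ⟨A, sA, hA⟩ := ihQ.2 _ _ s1
            exact ⟨_, .parR _ sA, .par hP hA⟩
  | bang h ih =>
      refine ⟨fun α X' s => ?_, fun α Y' s => ?_⟩
      · cases s with
        | bang s1 =>
            obtain ⟨A, sA, hA⟩ := ih.1 _ _ s1
            exact ⟨_, .bang sA, .par hA (.bang h)⟩
        | bangCom s1 s2 =>
            obtain ⟨A, sA, hA⟩ := ih.1 _ _ s1
            obtain ⟨B, sB, hB⟩ := ih.1 _ _ s2
            exact ⟨_, .bangCom sA sB, .par hA (.par hB (.bang h))⟩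
      · cases s with
        | bang s1 =>
            obtain ⟨A, sA, hA⟩ := ih.2 _ _ s1
            exact ⟨_, .bang sA, .par hA (.bang h)⟩
        | bangCom s1 s2 =>
            obtain ⟨A, sA, hA⟩ := ih.2 _ _ s1
            obtain ⟨B, sB, hB⟩ := ih.2 _ _ s2
            exact ⟨_, .bangCom sA sB, .par hA (.par hB (.bang h))⟩
  | parNil P =>
      refine ⟨fun α X' s => ?_, fun α Y' s => ?_⟩
      · cases s with
        | comL s1 s2 => cases s2
        | comR s1 s2 => cases s1
        | parL _ s1 => exact ⟨_, s1, .parNil _⟩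
        | parR _ s1 => cases s1
      · exact ⟨_, .parL _ s, .parNil _⟩
  | parAssoc P Q R =>
      refine ⟨fun α X' s => ?_, fun α Y' s => ?_⟩
      · cases s with
        | parL _ s1 => exact ⟨_, .parL _ (.parL _ s1), .parAssoc _ _ _⟩
        | parR _ s1 =>
            cases s1 with
            | parL _ s2 => exact ⟨_, .parL _ (.parR _ s2), .parAssoc _ _ _⟩
            | parR _ s2 => exact ⟨_, .parR _ s2, .parAssoc _ _ _⟩
            | comL s2 s3 => exact ⟨_, .comL (.parR _ s2) s3, .parAssoc _ _ _⟩
            | comR s2 s3 => exact ⟨_, .comR s2 (.parR _ s3), .parAssoc _ _ _⟩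
        | comL s1 s2 =>
            cases s2 with
            | parL _ s3 => exact ⟨_, .parL _ (.comL s1 s3), .parAssoc _ _ _⟩
            | parR _ s3 => exact ⟨_, .comL (.parL _ s1) s3, .parAssoc _ _ _⟩
        | comR s1 s2 =>
            cases s1 with
            | parL _ s3 => exact ⟨_, .parL _ (.comR s3 s2), .parAssoc _ _ _⟩
            | parR _ s3 => exact ⟨_, .comR s3 (.parL _ s2), .parAssoc _ _ _⟩
      · cases s with
        | parL _ s1 =>
            cases s1 with
            | parL _ s2 => exact ⟨_, .parL _ s2, .parAssoc _ _ _⟩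
            | parR _ s2 => exact ⟨_, .parR _ (.parL _ s2), .parAssoc _ _ _⟩
            | comL s2 s3 => exact ⟨_, .comL s2 (.parL _ s3), .parAssoc _ _ _⟩
            | comR s2 s3 => exact ⟨_, .comR (.parL _ s2) s3, .parAssoc _ _ _⟩
        | parR _ s1 => exact ⟨_, .parR _ (.parR _ s1), .parAssoc _ _ _⟩
        | comL s1 s2 =>
            cases s1 with
            | parL _ s3 => exact ⟨_, .comL s3 (.parR _ s2), .parAssoc _ _ _⟩
            | parR _ s3 => exact ⟨_, .parR _ (.comL s3 s2), .parAssoc _ _ _⟩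
        | comR s1 s2 =>
            cases s2 with
            | parL _ s3 => exact ⟨_, .comR (.parR _ s1) s3, .parAssoc _ _ _⟩
            | parR _ s3 => exact ⟨_, .parR _ (.comR s1 s3), .parAssoc _ _ _⟩
  | parComm P Q =>
      refine ⟨fun α X' s => ?_, fun α Y' s => ?_⟩
      · cases s with
        | parL _ s1 => exact ⟨_, .parR _ s1, .parComm _ _⟩
        | parR _ s1 => exact ⟨_, .parL _ s1, .parComm _ _⟩
        | comL s1 s2 => exact ⟨_, .comR s1 s2, .parComm _ _⟩
        | comR s1 s2 => exact ⟨_, .comL s1 s2, .parComm _ _⟩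
      · cases s with
        | parL _ s1 => exact ⟨_, .parR _ s1, .parComm _ _⟩
        | parR _ s1 => exact ⟨_, .parL _ s1, .parComm _ _⟩
        | comL s1 s2 => exact ⟨_, .comR s1 s2, .parComm _ _⟩
        | comR s1 s2 => exact ⟨_, .comL s1 s2, .parComm _ _⟩

theorem sc_step {X Y : Proc} (h : SC X Y) {α : Act} {X' : Proc} (s : Step X α X') :
    ∃ Y', Step Y α Y' ∧ SC X' Y' :=
  (sc_step_aux h).1 _ _ s

theorem sc_taus {X Y X' : Proc} (h : SC X Y) (t : Taus X X') :
    ∃ Y', Taus Y Y' ∧ SC X' Y' := by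
  induction t with
  | refl => exact ⟨Y, .refl, h⟩
  | tail _ s ih =>
      obtain ⟨Z, tz, hz⟩ := ih
      obtain ⟨W, sw, hw⟩ := sc_step hz s
      exact ⟨W, tz.tail sw, hw⟩

/-- `X` contains `!p` as a parallel component (at any depth of parallel nesting). -/
inductive HasBang (p : Proc) : Proc → Prop
  | base : HasBang p (.bang p)
  | left {A : Proc} (B : Proc) : HasBang p A → HasBang p (.par A B)
  | right (A : Proc) {B : Proc} : HasBang p B → HasBang p (.par A B)

theorem hasbang_step {p X X' : Proc} {α : Act} (s : Step X α X') (h : HasBang p X) :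
    HasBang p X' := by
  induction s with
  | inp => cases h
  | out => cases h
  | comL s1 s2 ih1 ih2 =>
      cases h with
      | left _ h => exact .left _ (ih1 h)
      | right _ h => exact .right _ (ih2 h)
  | comR s1 s2 ih1 ih2 =>
      cases h with
      | left _ h => exact .left _ (ih2 h)
      | right _ h => exact .right _ (ih1 h)
  | parL _ s1 ih =>
      cases h with
      | left _ h => exact .left _ (ih h)
      | right _ h => exact .right _ h
  | parR _ s1 ih =>
      cases h with
      | left _ h => exact .left _ h
      | right _ h => exact .right _ (ih h)
  | bang s1 ih => cases h with | base => exact .right _ .base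
  | bangCom s1 s2 => cases h with | base => exact .right _ (.right _ .base)

theorem hasbang_taus {p X X' : Proc} (t : Taus X X') (h : HasBang p X) : HasBang p X' := by
  induction t with
  | refl => exact h
  | tail _ s ih => exact hasbang_step s ih

theorem hasbang_decomp {p X : Proc} (h : HasBang p X) :
    ∃ M, SC X (.par M (.bang p)) := by
  induction h with
  | base => exact ⟨.nil, .symm ((SC.parComm _ _).trans (SC.parNil _))⟩
  | left B _ ih =>
      obtain ⟨M, hM⟩ := ih
      exact ⟨.par M B, (SC.par hM (SC.refl B)).trans
        (((SC.parAssoc M _ B).symm).trans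
          ((SC.par (SC.refl M) (SC.parComm _ B)).trans (SC.parAssoc M B _)))⟩
  | right A _ ih =>
      obtain ⟨M, hM⟩ := ih
      exact ⟨.par A M, (SC.par (SC.refl A) hM).trans (SC.parAssoc A M _)⟩

theorem taus_parR {M X X' : Proc} (t : Taus X X') : Taus (.par M X) (.par M X') :=
  Relation.ReflTransGen.lift (r := TauStep) (p := TauStep) (fun Z => Proc.par M Z) (fun _ _ s => Step.parR M s) _ _ t

/-- `N` is "garbage" for `p`: `!p` τ-reaches, up to SC, `N | !p`. -/
def Garb (p N : Proc) : Prop :=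
  ∃ Z, Taus (.bang p) Z ∧ SC Z (.par N (.bang p))

theorem reach_garb {p X N : Proc} (hX : HasBang p X) (hN : Garb p N) :
    ∃ X₁, Taus X X₁ ∧ SC X₁ (.par N X) := by
  obtain ⟨M, hM⟩ := hasbang_decomp hX
  obtain ⟨Z, hZt, hZ⟩ := hN
  obtain ⟨X₁, hX₁t, hX₁⟩ := sc_taus hM.symm (taus_parR (M := M) hZt)
  refine ⟨X₁, hX₁t, hX₁.symm.trans ?_⟩
  exact (SC.par (SC.refl M) hZ).trans ((SC.parAssoc M N _).trans
    ((SC.par (SC.parComm M N) (SC.refl _)).trans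
      ((SC.parAssoc N M _).symm.trans (SC.par (SC.refl N) hM.symm))))

theorem div_strong {R : Proc → Proc → Prop}
    (h : ∀ ⦃X Y⦄, R X Y → ∀ ⦃X'⦄, TauStep X X' → ∃ Y', TauStep Y Y' ∧ R X' Y')
    {X Y : Proc} (r : R X Y) : Divergent X → Divergent Y := by
  rintro ⟨f, hf0, hfs⟩
  let g : ∀ n : ℕ, {q : Proc // R (f n) q} := fun n =>
    Nat.rec (motive := fun n => {q : Proc // R (f n) q})
      ⟨Y, by rw [hf0]; exact r⟩
      (fun n ih => ⟨(h ih.2 (hfs n)).choose, (h ih.2 (hfs n)).choose_spec.2⟩) n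
  exact ⟨fun n => (g n).1, rfl, fun n => (h (g n).2 (hfs n)).choose_spec.1⟩

theorem div_sc {X Y : Proc} (h : SC X Y) : Divergent X → Divergent Y :=
  div_strong (R := SC) (fun _ _ h _ s => sc_step h s) h

theorem div_parR {N X : Proc} : Divergent X → Divergent (.par N X) :=
  div_strong (R := fun A B => B = .par N A)
    (by rintro A B rfl X' s; exact ⟨_, Step.parR N s, rfl⟩) rfl

theorem div_prepend_step {X Y : Proc} (s : TauStep X Y) : Divergent Y → Divergent X := by
  rintro ⟨f, hf0, hfs⟩
  refine ⟨fun n => Nat.casesOn n X f, ?_, fun n => ?_⟩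
  · rfl
  · cases n with
    | zero => show TauStep X (f 0); rw [hf0]; exact s
    | succ n => exact hfs n

theorem div_prepend {X Y : Proc} (t : Taus X Y) : Divergent Y → Divergent X := by
  induction t using Relation.ReflTransGen.head_induction_on with
  | refl => exact id
  | head s _ ih => exact fun d => div_prepend_step s (ih d)

theorem weakhat_of_step {Q Q' : Proc} {α : Act} (s : Step Q α Q') : WeakHat Q α Q' := by
  cases α with
  | tau => exact Relation.ReflTransGen.single s
  | inp a => exact ⟨Q, Q', .refl, s, .refl⟩
  | out a => exact ⟨Q, Q', .refl, s, .refl⟩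

theorem weakhat_taus_step {Q Q₁ Q₂ : Proc} {α : Act} (t : Taus Q Q₁) (s : Step Q₁ α Q₂) :
    WeakHat Q α Q₂ := by
  cases α with
  | tau => exact t.tail s
  | inp a => exact ⟨Q₁, Q₂, t, s, .refl⟩
  | out a => exact ⟨Q₁, Q₂, t, s, .refl⟩

/-- The candidate weak bisimulation. -/
def BRel (p X Y : Proc) : Prop :=
  SC X Y ∨
  (∃ N, HasBang p X ∧ Garb p N ∧ SC Y (.par N X)) ∨
  (∃ N, HasBang p Y ∧ Garb p N ∧ SC X (.par N Y))


/-- whenever `!P ⟹ P'`, it holds that `!P ≈ P'`. -/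
theorem bang_taus_wbisim (P P' : Proc) (h : Taus (.bang P) P') :
    WBisim (.bang P) P' := by
  refine ⟨BRel P, ⟨?_, ?_, ?_⟩, ?_⟩
  · -- symmetric
    rintro X Y (hs | ⟨N, h1, h2, h3⟩ | ⟨N, h1, h2, h3⟩)
    · exact Or.inl hs.symm
    · exact Or.inr (Or.inr ⟨N, h1, h2, h3⟩)
    · exact Or.inr (Or.inl ⟨N, h1, h2, h3⟩)
  · -- divergence-sensitive
    rintro X Y (hs | ⟨N, hB, hG, hY⟩ | ⟨N, hB, hG, hX⟩)
    · exact ⟨div_sc hs, div_sc hs.symm⟩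
    · constructor
      · exact fun d => div_sc hY.symm (div_parR d)
      · intro d
        obtain ⟨X₁, ht, hsc⟩ := reach_garb hB hG
        exact div_prepend ht (div_sc hsc.symm (div_sc hY d))
    · constructor
      · intro d
        obtain ⟨Y₁, ht, hsc⟩ := reach_garb hB hG
        exact div_prepend ht (div_sc hsc.symm (div_sc hX d))
      · exact fun d => div_sc hX.symm (div_parR d)
  · -- transfer
    rintro X Y (hs | ⟨N, hB, hG, hY⟩ | ⟨N, hB, hG, hX⟩) α X' s
    · obtain ⟨Y', sY, hsc⟩ := sc_step hs s
      exact ⟨Y', weakhat_of_step sY, Or.inl hsc⟩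
    · obtain ⟨Y', sY, hsc⟩ := sc_step hY.symm (Step.parR N s)
      exact ⟨Y', weakhat_of_step sY,
        Or.inr (Or.inl ⟨N, hasbang_step s hB, hG, hsc.symm⟩)⟩
    · obtain ⟨W, sW, hW⟩ := sc_step hX s
      obtain ⟨Y₁, hY₁t, hY₁⟩ := reach_garb hB hG
      obtain ⟨Y₂, sY₂, hY₂⟩ := sc_step hY₁.symm sW
      exact ⟨Y₂, weakhat_taus_step hY₁t sY₂, Or.inl (hW.trans hY₂)⟩
  · -- initial pair
    obtain ⟨N, hN⟩ := hasbang_decomp (hasbang_taus h HasBang.base)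
    exact Or.inr (Or.inl ⟨N, HasBang.base, ⟨P', h, hN⟩, hN⟩)
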